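/- Let Ǎ be the operator on smooth functions of (x,y,a₂,a₃) with x > y given by Ǎφ = 3 ∂²φ/∂y² + (2/(x−y)) ∂φ/∂x + 2 ∂φ/∂a₂ + 2y ∂φ/∂a₃. Then: (i) Ǎ Θ = 0 for Θ(x,y,a₂) = (1/5)(x−y)² − a₂; (ii) Ǎ Ξ = 2(x−y)^{−1} for Ξ(x,y) = x; and (iii) Ǎ Υ = (20/7)(x−y)^{4/3} for Υ(x,y,a₂,a₃) = (x−y)^{1/3}((2/21)x³ + (1/7)x²y + (3/7)xy² − a₃). In particular Θ is a local martingale function for the reversed chordal SLE₆ while Ξ and Υ are not. -/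

import Mathlib

noncomputable section

/-- The generator `Ǎ` of the reversed chordal SLE₆ acting on smooth functions
of `(x,y,a₂,a₃)`. -/
def Arev14 (f : ℝ → ℝ → ℝ → ℝ → ℝ) (x y a₂ a₃ : ℝ) : ℝ :=
  3 * deriv (fun y' => deriv (fun y'' => f x y'' a₂ a₃) y') y
    + 2 / (x - y) * deriv (fun x' => f x' y a₂ a₃) x
    + 2 * deriv (fun a₂' => f x y a₂' a₃) a₂
    + 2 * y * deriv (fun a₃' => f x y a₂ a₃') a₃

/-- `Θ(x,y,a₂) = (1/5)(x-y)² - a₂`, as a function of `(x,y,a₂,a₃)`. -/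
def Θ14 (x y a₂ _a₃ : ℝ) : ℝ := 1 / 5 * (x - y) ^ 2 - a₂

/-- `Ξ(x,y) = x`, as a function of `(x,y,a₂,a₃)`. -/
def Ξ14 (x _y _a₂ _a₃ : ℝ) : ℝ := x

/-- `Υ(x,y,a₂,a₃) = (x-y)^{1/3}((2/21)x³ + (1/7)x²y + (3/7)xy² - a₃)`. -/
def Υ14 (x y _a₂ a₃ : ℝ) : ℝ :=
  (x - y) ^ ((1 : ℝ) / 3)
    * (2 / 21 * x ^ 3 + 1 / 7 * x ^ 2 * y + 3 / 7 * x * y ^ 2 - a₃)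

end

private lemma hasDerivAt_congr_d {f : ℝ → ℝ} {a b t : ℝ} (h : HasDerivAt f a t)
    (hab : a = b) : HasDerivAt f b t := hab ▸ h

open Real

/-- `Ǎ Θ = 0`, `Ǎ Ξ = 2(x-y)⁻¹` and `Ǎ Υ = (20/7)(x-y)^{4/3}`:
`Θ` is a local martingale function for the reversed chordal SLE₆ while `Ξ`, `Υ`
are not. -/
theorem stmt_14 :
    ∀ x y a₂ a₃ : ℝ, y < x →
      (Arev14 Θ14 x y a₂ a₃ = 0)
      ∧ (Arev14 Ξ14 x y a₂ a₃ = 2 * (x - y)⁻¹)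
      ∧ (Arev14 Υ14 x y a₂ a₃ = 20 / 7 * (x - y) ^ ((4 : ℝ) / 3)) := by
  intro x y a₂ a₃ hxy
  have hs : (0:ℝ) < x - y := sub_pos.2 hxy
  have hsne : x - y ≠ 0 := ne_of_gt hs
  refine ⟨?_, ?_, ?_⟩
  · -- Θ
    have hinner : ∀ t : ℝ, HasDerivAt (fun y'' => Θ14 x y'' a₂ a₃)
        (2/5 * t - 2/5 * x) t := by
      intro t
      have h := ((((hasDerivAt_id t).const_sub x).pow 2).const_mul (1/5)).sub_const a₂
      exact hasDerivAt_congr_d h (by simp only [id_eq]; push_cast; ring)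
    have h1 : (fun y' => deriv (fun y'' => Θ14 x y'' a₂ a₃) y')
        = fun y' => 2/5 * y' - 2/5 * x := funext fun t => (hinner t).deriv
    have hy2 : deriv (fun y' => deriv (fun y'' => Θ14 x y'' a₂ a₃) y') y = 2/5 := by
      rw [h1]
      have h2 : HasDerivAt (fun y' : ℝ => 2/5 * y' - 2/5 * x) (2/5 : ℝ) y := by
        have h := (((hasDerivAt_id y).const_mul (2/5)).sub_const (2/5 * x))
        exact hasDerivAt_congr_d h (by norm_num)
      rw [h2.deriv]
    have hx1 : deriv (fun x' => Θ14 x' y a₂ a₃) x = 2/5 * (x - y) := by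
      have h := ((((hasDerivAt_id x).sub_const y).pow 2).const_mul (1/5)).sub_const a₂
      rw [(hasDerivAt_congr_d h (by simp only [id_eq]; push_cast; ring) :
        HasDerivAt (fun x' => Θ14 x' y a₂ a₃) (2/5 * (x - y)) x).deriv]
    have ha2 : deriv (fun a₂' => Θ14 x y a₂' a₃) a₂ = -1 := by
      have h := (hasDerivAt_const a₂ (1/5 * (x - y)^2)).sub (hasDerivAt_id a₂)
      rw [(hasDerivAt_congr_d h (by ring) :
        HasDerivAt (fun a₂' => Θ14 x y a₂' a₃) (-1) a₂).deriv]
    have ha3 : deriv (fun a₃' => Θ14 x y a₂ a₃') a₃ = 0 := by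
      simp [Θ14]
    rw [Arev14, hy2, hx1, ha2, ha3]
    field_simp
    ring
  · -- Ξ
    have h1 : (fun y' => deriv (fun y'' => Ξ14 x y'' a₂ a₃) y') = fun _ => (0:ℝ) := by
      funext t; simp [Ξ14]
    have hy2 : deriv (fun y' => deriv (fun y'' => Ξ14 x y'' a₂ a₃) y') y = 0 := by
      rw [h1]; simp
    have hx1 : deriv (fun x' => Ξ14 x' y a₂ a₃) x = 1 := by
      simp [Ξ14]
    have ha2 : deriv (fun a₂' => Ξ14 x y a₂' a₃) a₂ = 0 := by simp [Ξ14]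
    have ha3 : deriv (fun a₃' => Ξ14 x y a₂ a₃') a₃ = 0 := by simp [Ξ14]
    rw [Arev14, hy2, hx1, ha2, ha3]
    field_simp
    ring
  · -- Υ
    -- a₂ derivative
    have ha2 : deriv (fun a₂' => Υ14 x y a₂' a₃) a₂ = 0 := by simp [Υ14]
    -- a₃ derivative
    have ha3 : deriv (fun a₃' => Υ14 x y a₂ a₃') a₃
        = (x - y) ^ ((1:ℝ)/3) * (-1) := by
      have h := ((hasDerivAt_id a₃).const_sub
          (2/21*x^3 + 1/7*x^2*y + 3/7*x*y^2)).const_mul ((x - y) ^ ((1:ℝ)/3))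
      rw [(hasDerivAt_congr_d h (by ring) :
        HasDerivAt (fun a₃' => Υ14 x y a₂ a₃') ((x - y) ^ ((1:ℝ)/3) * (-1)) a₃).deriv]
    -- x derivative
    have hx1 : deriv (fun x' => Υ14 x' y a₂ a₃) x
        = 1/3 * (x - y) ^ ((1:ℝ)/3 - 1) * (2/21*x^3 + 1/7*x^2*y + 3/7*x*y^2 - a₃)
          + (x - y) ^ ((1:ℝ)/3) * (2/7*x^2 + 2/7*x*y + 3/7*y^2) := by
      have hr : HasDerivAt (fun x' => (x' - y) ^ ((1:ℝ)/3))
          (1 * ((1:ℝ)/3) * (x - y) ^ ((1:ℝ)/3 - 1)) x :=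
        ((hasDerivAt_id x).sub_const y).rpow_const (Or.inl (by simpa using hsne))
      have hp : HasDerivAt (fun x' => 2/21*x'^3 + 1/7*x'^2*y + 3/7*x'*y^2 - a₃)
          (2/7*x^2 + 2/7*x*y + 3/7*y^2) x := by
        have h := ((((hasDerivAt_pow 3 x).const_mul (2/21)).add
            (((hasDerivAt_pow 2 x).const_mul (1/7)).mul_const y)).add
            (((hasDerivAt_id x).const_mul (3/7)).mul_const (y^2))).sub_const a₃
        exact hasDerivAt_congr_d h (by push_cast; ring)
      have h := hr.mul hp
      rw [(hasDerivAt_congr_d h (by ring) : HasDerivAt (fun x' => Υ14 x' y a₂ a₃)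
        (1/3 * (x - y) ^ ((1:ℝ)/3 - 1) * (2/21*x^3 + 1/7*x^2*y + 3/7*x*y^2 - a₃)
          + (x - y) ^ ((1:ℝ)/3) * (2/7*x^2 + 2/7*x*y + 3/7*y^2)) x).deriv]
    -- y derivatives
    set G : ℝ → ℝ := fun t =>
      -(1/3) * (x - t) ^ ((1:ℝ)/3 - 1) * (2/21*x^3 + 1/7*x^2*t + 3/7*x*t^2 - a₃)
        + (x - t) ^ ((1:ℝ)/3) * (1/7*x^2 + 6/7*x*t) with hGdef
    have hinner : ∀ t : ℝ, t < x →
        HasDerivAt (fun y'' => Υ14 x y'' a₂ a₃) (G t) t := by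
      intro t ht
      have hne : x - t ≠ 0 := sub_ne_zero.2 ht.ne'
      have hr : HasDerivAt (fun y'' => (x - y'') ^ ((1:ℝ)/3))
          (-1 * ((1:ℝ)/3) * (x - t) ^ ((1:ℝ)/3 - 1)) t :=
        ((hasDerivAt_id t).const_sub x).rpow_const (Or.inl (by simpa using hne))
      have hp : HasDerivAt (fun y'' => 2/21*x^3 + 1/7*x^2*y'' + 3/7*x*y''^2 - a₃)
          (1/7*x^2 + 6/7*x*t) t := by
        have h := (((hasDerivAt_const t (2/21*x^3)).add
            ((hasDerivAt_id t).const_mul (1/7*x^2))).add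
            ((hasDerivAt_pow 2 t).const_mul (3/7*x))).sub_const a₃
        exact hasDerivAt_congr_d h (by push_cast; ring)
      exact hasDerivAt_congr_d (hr.mul hp) (by rw [hGdef]; ring)
    have hEq : (fun y' => deriv (fun y'' => Υ14 x y'' a₂ a₃) y') =ᶠ[nhds y] G := by
      filter_upwards [Iio_mem_nhds hxy] with t ht using (hinner t ht).deriv
    have hGd : HasDerivAt G
        (-(1/3) * (-1 * ((1:ℝ)/3 - 1) * (x - y) ^ ((1:ℝ)/3 - 1 - 1))
            * (2/21*x^3 + 1/7*x^2*y + 3/7*x*y^2 - a₃)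
          + -(1/3) * (x - y) ^ ((1:ℝ)/3 - 1) * (1/7*x^2 + 6/7*x*y)
          + (-1 * ((1:ℝ)/3) * (x - y) ^ ((1:ℝ)/3 - 1)) * (1/7*x^2 + 6/7*x*y)
          + (x - y) ^ ((1:ℝ)/3) * (6/7*x)) y := by
      have hr1 : HasDerivAt (fun t : ℝ => (x - t) ^ ((1:ℝ)/3 - 1))
          (-1 * ((1:ℝ)/3 - 1) * (x - y) ^ ((1:ℝ)/3 - 1 - 1)) y :=
        ((hasDerivAt_id y).const_sub x).rpow_const (Or.inl (by simpa using hsne))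
      have hr2 : HasDerivAt (fun t : ℝ => (x - t) ^ ((1:ℝ)/3))
          (-1 * ((1:ℝ)/3) * (x - y) ^ ((1:ℝ)/3 - 1)) y :=
        ((hasDerivAt_id y).const_sub x).rpow_const (Or.inl (by simpa using hsne))
      have hp : HasDerivAt (fun t : ℝ => 2/21*x^3 + 1/7*x^2*t + 3/7*x*t^2 - a₃)
          (1/7*x^2 + 6/7*x*y) y := by
        have h := (((hasDerivAt_const y (2/21*x^3)).add
            ((hasDerivAt_id y).const_mul (1/7*x^2))).add
            ((hasDerivAt_pow 2 y).const_mul (3/7*x))).sub_const a₃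
        exact hasDerivAt_congr_d h (by push_cast; ring)
      have hl : HasDerivAt (fun t : ℝ => 1/7*x^2 + 6/7*x*t) (6/7*x) y := by
        have h := (hasDerivAt_const y (1/7*x^2)).add ((hasDerivAt_id y).const_mul (6/7*x))
        exact hasDerivAt_congr_d h (by ring)
      have h := ((hr1.const_mul (-(1/3:ℝ))).mul hp).add (hr2.mul hl)
      exact hasDerivAt_congr_d h (by ring)
    have hy2 := hEq.deriv_eq.trans hGd.deriv
    rw [Arev14, hy2, hx1, ha2, ha3]
    -- rewrite rpow powers in terms of u := (x-y)^(1/3)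
    have e1 : (x - y) ^ ((1:ℝ)/3 - 1) = (x - y) ^ ((1:ℝ)/3) * (x - y)⁻¹ := by
      rw [show (1:ℝ)/3 - 1 = 1/3 + (-1) by ring, rpow_add hs, rpow_neg_one]
    have e2 : (x - y) ^ ((1:ℝ)/3 - 1 - 1) = (x - y) ^ ((1:ℝ)/3) * ((x - y)^2)⁻¹ := by
      rw [show (1:ℝ)/3 - 1 - 1 = 1/3 + (-2) by ring, rpow_add hs,
        show (-2:ℝ) = -((2:ℕ):ℝ) by norm_num, rpow_neg hs.le, rpow_natCast]
    have e3 : (x - y) ^ ((4:ℝ)/3) = (x - y) ^ ((1:ℝ)/3) * (x - y) := by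
      rw [show (4:ℝ)/3 = 1/3 + 1 by ring, rpow_add hs, rpow_one]
    rw [e1, e2, e3]
    set u := (x - y) ^ ((1:ℝ)/3) with hu
    field_simp
    ring
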